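/- Let k, L, n, α be natural numbers with n ≥ 1 and L ≥ 1, and let ρ_J be a real number with 0 < ρ_J. Let Enc : (Fin k → Bool) → (Fin L → Bool) and Dec : (Fin L → Bool) → (Fin k → Bool) be functions such that for every message r and every word y' with hammingDist(Enc r, y') ≤ ρ_J·L, one has Dec y' = r. Fix a message r and a corrupted n-block word Y' : Fin n → (Fin L → Bool) satisfying Σ_{i} hammingDist(Enc r, Y' i) ≤ (ρ_J/4)·n·L. If I₁, …, I_α are independent random indices, each uniform over Fin n, then the probability that strictly more than α/2 of the decoded samples Dec(Y'(I_j)) equal r is at least 1 − exp(−α/24). -/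

import Mathlib

open MeasureTheory ProbabilityTheory Finset ENNReal

/-- Local decoding of a repeated inner codeword by sampling and majority vote: if the
inner code corrects a `ρ_J` fraction of errors, the total corruption across the `n`
repeated blocks is at most a `ρ_J/4` fraction, and `I₁, …, I_α` are independent
uniform indices, then strictly more than `α/2` of the decoded samples equal the seed
`r` with probability at least `1 − exp(−α/24)`. -/
theorem stmt11 {Ω : Type*} [MeasurableSpace Ω] (μ : Measure Ω) [IsProbabilityMeasure μ]
    (k L n α : ℕ) (hn : 1 ≤ n) (hL : 1 ≤ L) (ρJ : ℝ) (hρJ : 0 < ρJ)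
    (Enc : (Fin k → Bool) → (Fin L → Bool)) (Dec : (Fin L → Bool) → (Fin k → Bool))
    (hDec : ∀ (r : Fin k → Bool) (y' : Fin L → Bool),
      (hammingDist (Enc r) y' : ℝ) ≤ ρJ * L → Dec y' = r)
    (r : Fin k → Bool) (Y' : Fin n → (Fin L → Bool))
    (hY' : (∑ i, (hammingDist (Enc r) (Y' i) : ℝ)) ≤ (ρJ / 4) * n * L)
    (I : Fin α → Ω → Fin n) (hmeas : ∀ j, Measurable (I j))
    (hindep : iIndepFun I μ)
    (hunif : ∀ (j : Fin α) (s : Fin n), μ {ω | I j ω = s} = 1 / (n : ℝ≥0∞)) :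
    1 - ENNReal.ofReal (Real.exp (-(α : ℝ) / 24)) ≤
      μ {ω | (α : ℝ) / 2 <
        ((Finset.univ.filter fun j => Dec (Y' (I j ω)) = r).card : ℝ)} := by
  classical
  set t : ℝ := Real.log 2 with ht_def
  have ht : 0 ≤ t := Real.log_nonneg one_le_two
  have hnR : (0:ℝ) < n := by exact_mod_cast hn
  have hLR : (0:ℝ) < L := by exact_mod_cast hL
  -- bad index set
  set B : Finset (Fin n) := Finset.univ.filter (fun i => ¬ Dec (Y' i) = r) with hB
  have hBdist : ∀ i ∈ B, ρJ * L ≤ (hammingDist (Enc r) (Y' i) : ℝ) := by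
    intro i hi
    by_contra h
    push_neg at h
    exact (Finset.mem_filter.mp hi).2 (hDec r (Y' i) h.le)
  have hBcard : (B.card : ℝ) ≤ n / 4 := by
    have h1 : (B.card : ℝ) * (ρJ * L) ≤ ∑ i ∈ B, (hammingDist (Enc r) (Y' i) : ℝ) := by
      simpa using Finset.card_nsmul_le_sum B _ _ hBdist
    have h2 : ∑ i ∈ B, (hammingDist (Enc r) (Y' i) : ℝ)
        ≤ ∑ i, (hammingDist (Enc r) (Y' i) : ℝ) :=
      Finset.sum_le_sum_of_subset_of_nonneg (Finset.subset_univ _)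
        (fun i _ _ => by positivity)
    nlinarith [mul_pos hρJ hLR, hY', h1, h2]
  -- indicator random variables
  set g : Fin n → ℝ := fun i => if Dec (Y' i) = r then 0 else 1 with hg
  set X : Fin α → Ω → ℝ := fun j => g ∘ I j with hX
  have hgmeas : Measurable g := measurable_of_countable g
  have hXmeas : ∀ j, Measurable (X j) := fun j => hgmeas.comp (hmeas j)
  have hXindep : iIndepFun X μ :=
    hindep.comp (fun _ => g) (fun _ => hgmeas)
  -- bad event per sample
  set A : Fin α → Set Ω := fun j => {ω | ¬ Dec (Y' (I j ω)) = r} with hA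
  have hAmeas : ∀ j, MeasurableSet (A j) := by
    intro j
    have : A j = I j ⁻¹' {i | ¬ Dec (Y' i) = r} := rfl
    rw [this]
    exact hmeas j ((Set.to_countable _).measurableSet)
  have hAle : ∀ j, (μ (A j)).toReal ≤ 1/4 := by
    intro j
    have hAeq : A j = ⋃ i ∈ B, I j ⁻¹' {i} := by
      ext ω
      simp [hA, hB]
    have hdisj : (↑B : Set (Fin n)).PairwiseDisjoint (fun i => I j ⁻¹' {i}) := by
      intro a _ b _ hab
      refine Set.disjoint_left.mpr ?_
      intro ω ha hb
      simp only [Set.mem_preimage, Set.mem_singleton_iff] at ha hb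
      exact hab (ha.symm.trans hb)
    have hμA : μ (A j) = B.card * (1 / (n : ℝ≥0∞)) := by
      rw [hAeq, measure_biUnion_finset hdisj (fun i _ => hmeas j (measurableSet_singleton i))]
      have heach : ∀ i ∈ B, μ (I j ⁻¹' {i}) = 1 / (n : ℝ≥0∞) := by
        intro i _
        have : I j ⁻¹' {i} = {ω | I j ω = i} := by ext ω; simp
        rw [this]; exact hunif j i
      rw [Finset.sum_congr rfl heach, Finset.sum_const, nsmul_eq_mul]
    have hnne : (n : ℝ≥0∞) ≠ 0 := Nat.cast_ne_zero.mpr (by omega)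
    have htr : (μ (A j)).toReal = (B.card : ℝ) / n := by
      rw [hμA, ENNReal.toReal_mul, div_eq_mul_inv]
      simp [ENNReal.toReal_inv, div_eq_mul_inv]
    rw [htr, div_le_iff₀ hnR]
    linarith
  -- the exponential moment of each sample
  have hexp : ∀ j, (fun ω => Real.exp (t * X j ω)) =
      fun ω => 1 + Set.indicator (A j) (fun _ => (1:ℝ)) ω := by
    intro j; funext ω
    by_cases h : Dec (Y' (I j ω)) = r
    · simp [hX, hg, h, hA, Set.indicator]
    · simp [hX, hg, h, hA, Set.indicator, Real.exp_log two_pos]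
      norm_num
      exact Real.exp_log two_pos
  have hintX : ∀ j, Integrable (fun ω => Real.exp (t * X j ω)) μ := by
    intro j
    rw [hexp j]
    exact (integrable_const 1).add
      ((integrable_indicator_iff (hAmeas j)).mpr
        (integrableOn_const (measure_ne_top μ _)))
  have hmgf : ∀ j, mgf (X j) μ t ≤ 5/4 := by
    intro j
    have hmeq : mgf (X j) μ t = 1 + (μ (A j)).toReal := by
      rw [mgf, hexp j, integral_add (integrable_const 1)
        ((integrable_indicator_iff (hAmeas j)).mpr
          (integrableOn_const (measure_ne_top μ _))),
        integral_const, integral_indicator_const (1:ℝ) (hAmeas j)]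
      simp
      rfl
    rw [hmeq]
    linarith [hAle j]
  -- Chernoff bound
  have hintS : Integrable (fun ω => Real.exp (t * (∑ j, X j) ω)) μ :=
    hXindep.integrable_exp_mul_sum hXmeas (fun j _ => hintX j)
  have hcher := measure_ge_le_exp_mul_mgf (μ := μ) (X := ∑ j, X j) ((α:ℝ)/2) ht hintS
  rw [hXindep.mgf_sum hXmeas] at hcher
  -- the numeric bound
  have hc : Real.exp (-(t/2)) * (5/4) ≤ Real.exp (-(1/24) : ℝ) := by
    have e1 : Real.exp (-(t/2)) * Real.exp (-(t/2)) = 1/2 := by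
      rw [← Real.exp_add, show -(t/2) + -(t/2) = -t by ring, Real.exp_neg,
        ht_def, Real.exp_log two_pos]
      norm_num
    have e2 : Real.exp (-(1/24):ℝ) * Real.exp (-(1/24):ℝ) = Real.exp (-(1/12):ℝ) := by
      rw [← Real.exp_add]; norm_num
    have e3 : (11:ℝ)/12 ≤ Real.exp (-(1/12):ℝ) := by
      linarith [Real.add_one_le_exp (-(1/12):ℝ)]
    nlinarith [Real.exp_pos (-(1/24):ℝ), Real.exp_pos (-(t/2))]
  have hbound : Real.exp (-t * ((α:ℝ)/2)) * ∏ j, mgf (X j) μ t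
      ≤ Real.exp (-(α:ℝ)/24) := by
    have h1 : ∏ j : Fin α, mgf (X j) μ t ≤ (5/4:ℝ)^α := by
      calc ∏ j : Fin α, mgf (X j) μ t ≤ ∏ _j : Fin α, (5/4:ℝ) :=
            Finset.prod_le_prod (fun j _ => mgf_nonneg) (fun j _ => hmgf j)
        _ = (5/4:ℝ)^α := by simp [div_pow]
    have h2 : Real.exp (-t * ((α:ℝ)/2)) = (Real.exp (-(t/2)))^α := by
      rw [← Real.exp_nat_mul]; congr 1; ring
    calc Real.exp (-t * ((α:ℝ)/2)) * ∏ j, mgf (X j) μ t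
        ≤ Real.exp (-t * ((α:ℝ)/2)) * (5/4:ℝ)^α :=
          mul_le_mul_of_nonneg_left h1 (Real.exp_pos _).le
      _ = (Real.exp (-(t/2)))^α * (5/4:ℝ)^α := by rw [h2]
      _ = (Real.exp (-(t/2)) * (5/4))^α := (mul_pow _ _ _).symm
      _ ≤ (Real.exp (-(1/24):ℝ))^α := pow_le_pow_left₀ (by positivity) hc α
      _ = Real.exp (-(α:ℝ)/24) := by rw [← Real.exp_nat_mul]; congr 1; ring
  -- relating the events
  have hSum : ∀ ω, (∑ j, X j) ω
      = (α:ℝ) - ((Finset.univ.filter fun j => Dec (Y' (I j ω)) = r).card : ℝ) := by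
    intro ω
    have hsplit : (Finset.univ.filter fun j => Dec (Y' (I j ω)) = r).card
        + (Finset.univ.filter fun j => ¬ Dec (Y' (I j ω)) = r).card = α := by
      simpa using Finset.card_filter_add_card_filter_not
        (s := (Finset.univ : Finset (Fin α))) (p := fun j => Dec (Y' (I j ω)) = r)
    have hXsum : (∑ j, X j) ω
        = ((Finset.univ.filter fun j => ¬ Dec (Y' (I j ω)) = r).card : ℝ) := by
      simp only [Finset.sum_apply, hX, hg, Function.comp]
      rw [show (fun j => if Dec (Y' (I j ω)) = r then (0:ℝ) else 1)
          = fun j => if ¬ Dec (Y' (I j ω)) = r then (1:ℝ) else 0 from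
        funext fun j => by by_cases h : Dec (Y' (I j ω)) = r <;> simp [h]]
      rw [Finset.sum_boole]
    rw [hXsum]
    have := hsplit
    push_cast [← hsplit]
    ring
  have hcompl : {ω | (α:ℝ)/2 <
        ((Finset.univ.filter fun j => Dec (Y' (I j ω)) = r).card : ℝ)}ᶜ
      ⊆ {ω | (α:ℝ)/2 ≤ (∑ j, X j) ω} := by
    intro ω hω
    simp only [Set.mem_compl_iff, Set.mem_setOf_eq, not_lt] at hω
    simp only [Set.mem_setOf_eq, hSum ω]
    linarith
  have hμF : μ {ω | (α:ℝ)/2 ≤ (∑ j, X j) ω}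
      ≤ ENNReal.ofReal (Real.exp (-(α:ℝ)/24)) := by
    refine (ENNReal.le_ofReal_iff_toReal_le (measure_ne_top μ _) (Real.exp_pos _).le).mpr ?_
    exact hcher.trans hbound
  rw [tsub_le_iff_right]
  calc (1:ℝ≥0∞) = μ Set.univ := measure_univ.symm
    _ ≤ μ {ω | (α:ℝ)/2 < ((Finset.univ.filter fun j => Dec (Y' (I j ω)) = r).card : ℝ)}
        + μ {ω | (α:ℝ)/2 < ((Finset.univ.filter fun j => Dec (Y' (I j ω)) = r).card : ℝ)}ᶜ := by
        rw [← Set.union_compl_self {ω | (α:ℝ)/2 <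
          ((Finset.univ.filter fun j => Dec (Y' (I j ω)) = r).card : ℝ)}]
        exact measure_union_le _ _
    _ ≤ μ {ω | (α:ℝ)/2 < ((Finset.univ.filter fun j => Dec (Y' (I j ω)) = r).card : ℝ)}
        + ENNReal.ofReal (Real.exp (-(α:ℝ)/24)) :=
        add_le_add_right ((measure_mono hcompl).trans hμF) _
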